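/- Let X be a random variable supported in [0,1] with CDF F_X and inverse CDF F_X^{-1}, fix δ ∈ [0,1) and an adversary decision s ∈ (0,1]. Then the CVaR at level δ of the ski-rental cost C(X,s) = s·1_{X>s} + (X+1)·1_{X≤s} equals (1−δ)⁻¹·[(1−δ−F_X(s))·s + ∫₀^{F_X(s)} (1 + F_X^{-1}(t)) dt] if F_X(s) ≤ 1−δ, and equals (1−δ)⁻¹·∫_{F_X(s)−(1−δ)}^{F_X(s)} (1 + F_X^{-1}(t)) dt otherwise. -/

import Mathlib

open MeasureTheory Set

/-- Conditional value-at-risk (loss version) of `f` under measure `μ` at level `δ ∈ [0,1)`. -/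
noncomputable def cvar (δ : ℝ) (μ : Measure ℝ) (f : ℝ → ℝ) : ℝ :=
  if δ = 1 then essSup f μ
  else ⨅ t : ℝ, t + (1 - δ)⁻¹ * ∫ x, max (f x - t) 0 ∂μ

/-- Continuous-time ski rental cost with buying cost 1. -/
noncomputable def csrCost (s x : ℝ) : ℝ := if x ≤ s then x + 1 else s

/-- CDF of the law `μ`. -/
noncomputable def cdfR (μ : Measure ℝ) (x : ℝ) : ℝ := (μ (Iic x)).toReal

/-- Inverse CDF of a law `μ` supported in `[a,b]`: `F⁻¹(p) = inf {x ∈ [a,b] : F(x) ≥ p}`. -/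
noncomputable def invCdf (a b : ℝ) (μ : Measure ℝ) (p : ℝ) : ℝ :=
  sInf {x | x ∈ Icc a b ∧ p ≤ cdfR μ x}

variable {μ : Measure ℝ}

lemma cdfR_mono [IsFiniteMeasure μ] : Monotone (cdfR μ) := fun _ _ h =>
  ENNReal.toReal_mono (measure_ne_top _ _) (measure_mono (Iic_subset_Iic.2 h))

lemma cdfR_nonneg (x : ℝ) : 0 ≤ cdfR μ x := ENNReal.toReal_nonneg

lemma cdfR_le_one [IsProbabilityMeasure μ] (x : ℝ) : cdfR μ x ≤ 1 := by
  have := ENNReal.toReal_mono (measure_ne_top μ univ) (measure_mono (subset_univ (Iic x)))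
  simpa [cdfR] using this

lemma cdfR_eq_cdf [IsProbabilityMeasure μ] (x : ℝ) : cdfR μ x = ProbabilityTheory.cdf μ x :=
  (ProbabilityTheory.cdf_eq_real μ x).symm

lemma cdfR_one [IsProbabilityMeasure μ] (hsupp : μ (Icc (0:ℝ) 1)ᶜ = 0) : cdfR μ 1 = 1 := by
  have h1 : μ (Iic 1) = 1 := by
    rw [← prob_compl_eq_zero_iff measurableSet_Iic]
    refine measure_mono_null ?_ hsupp
    intro y hy
    simp only [mem_compl_iff, mem_Iic, not_le, mem_Icc, not_and_or] at hy ⊢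
    right; linarith
  rw [cdfR, h1, ENNReal.toReal_one]

lemma isClosed_le_cdfR [IsProbabilityMeasure μ] (p : ℝ) : IsClosed {x | p ≤ cdfR μ x} := by
  rw [← isOpen_compl_iff, isOpen_iff_mem_nhds]
  intro y hy
  simp only [mem_compl_iff, mem_setOf_eq, not_le] at hy
  have hrc : ContinuousWithinAt (cdfR μ) (Ici y) y := by
    have := (ProbabilityTheory.cdf μ).right_continuous y
    exact this.congr (fun z _ => cdfR_eq_cdf z) (cdfR_eq_cdf y)
  have h1 : ∀ᶠ z in nhdsWithin y (Ici y), cdfR μ z < p := hrc.eventually_lt_const hy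
  have h2 : ∀ᶠ z in nhdsWithin y (Ioi y), cdfR μ z < p :=
    h1.filter_mono (nhdsWithin_mono y Ioi_subset_Ici_self)
  obtain ⟨z, hz, hzy⟩ := (h2.and eventually_mem_nhdsWithin).exists
  refine Filter.mem_of_superset (Iio_mem_nhds hzy) ?_
  intro w hw
  simp only [mem_compl_iff, mem_setOf_eq, not_le]
  exact lt_of_le_of_lt (cdfR_mono (le_of_lt hw)) hz

lemma invCdf_le_iff [IsProbabilityMeasure μ] (hsupp : μ (Icc (0:ℝ) 1)ᶜ = 0)
    {x p : ℝ} (hx : x ∈ Icc (0:ℝ) 1) (hp : p ≤ 1) :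
    invCdf 0 1 μ p ≤ x ↔ p ≤ cdfR μ x := by
  have hne : ({y | y ∈ Icc (0:ℝ) 1 ∧ p ≤ cdfR μ y}).Nonempty :=
    ⟨1, ⟨zero_le_one, le_refl 1⟩, by rw [cdfR_one hsupp]; exact hp⟩
  have hbd : BddBelow {y | y ∈ Icc (0:ℝ) 1 ∧ p ≤ cdfR μ y} := ⟨0, fun y hy => hy.1.1⟩
  constructor
  · intro h
    have hcl : IsClosed {y | y ∈ Icc (0:ℝ) 1 ∧ p ≤ cdfR μ y} := by
      have : {y | y ∈ Icc (0:ℝ) 1 ∧ p ≤ cdfR μ y} = Icc 0 1 ∩ {y | p ≤ cdfR μ y} := rfl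
      rw [this]; exact isClosed_Icc.inter (isClosed_le_cdfR p)
    have hmem := hcl.csInf_mem hne hbd
    exact le_trans hmem.2 (cdfR_mono (le_trans (le_refl _) h))
  · intro h
    exact csInf_le hbd ⟨hx, h⟩

lemma invCdf_mem [IsProbabilityMeasure μ] (hsupp : μ (Icc (0:ℝ) 1)ᶜ = 0)
    {p : ℝ} (hp : p ≤ 1) : invCdf 0 1 μ p ∈ Icc (0:ℝ) 1 := by
  have hne : ({y | y ∈ Icc (0:ℝ) 1 ∧ p ≤ cdfR μ y}).Nonempty :=
    ⟨1, ⟨zero_le_one, le_refl 1⟩, by rw [cdfR_one hsupp]; exact hp⟩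
  have hbd : BddBelow {y | y ∈ Icc (0:ℝ) 1 ∧ p ≤ cdfR μ y} := ⟨0, fun y hy => hy.1.1⟩
  constructor
  · exact le_csInf hne (fun y hy => hy.1.1)
  · exact csInf_le hbd ⟨⟨zero_le_one, le_refl 1⟩, by rw [cdfR_one hsupp]; exact hp⟩

lemma invCdf_mono [IsProbabilityMeasure μ] (hsupp : μ (Icc (0:ℝ) 1)ᶜ = 0)
    {p q : ℝ} (hpq : p ≤ q) (hq : q ≤ 1) : invCdf 0 1 μ p ≤ invCdf 0 1 μ q := by
  have hne : ({y | y ∈ Icc (0:ℝ) 1 ∧ q ≤ cdfR μ y}).Nonempty :=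
    ⟨1, ⟨zero_le_one, le_refl 1⟩, by rw [cdfR_one hsupp]; exact hq⟩
  have hbd : BddBelow {y | y ∈ Icc (0:ℝ) 1 ∧ p ≤ cdfR μ y} := ⟨0, fun y hy => hy.1.1⟩
  exact csInf_le_csInf hbd hne (fun y hy => ⟨hy.1, le_trans hpq hy.2⟩)

lemma invCdf_min_monotone [IsProbabilityMeasure μ] (hsupp : μ (Icc (0:ℝ) 1)ᶜ = 0) :
    Monotone (fun p => invCdf 0 1 μ (min p 1)) := fun a b hab =>
  invCdf_mono hsupp (min_le_min_right 1 hab) (min_le_right b 1)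

lemma map_invCdf [IsProbabilityMeasure μ] (hsupp : μ (Icc (0:ℝ) 1)ᶜ = 0) :
    Measure.map (fun p => invCdf 0 1 μ (min p 1)) (volume.restrict (Ioc (0:ℝ) 1)) = μ := by
  have hQm : Measurable (fun p => invCdf 0 1 μ (min p 1)) :=
    (invCdf_min_monotone hsupp).measurable
  haveI : IsFiniteMeasure (Measure.map (fun p => invCdf 0 1 μ (min p 1))
      (volume.restrict (Ioc (0:ℝ) 1))) := by
    constructor
    rw [Measure.map_apply hQm MeasurableSet.univ]
    simp [Real.volume_Ioc]
  refine Measure.ext_of_Iic _ _ (fun x => ?_)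
  rw [Measure.map_apply hQm measurableSet_Iic,
    Measure.restrict_apply (hQm measurableSet_Iic)]
  rcases lt_or_ge x 0 with hx | hx
  · have h1 : (fun p => invCdf 0 1 μ (min p 1)) ⁻¹' Iic x ∩ Ioc 0 1 = ∅ := by
      ext p
      simp only [mem_inter_iff, mem_preimage, mem_Iic, mem_Ioc, mem_empty_iff_false,
        iff_false, not_and]
      intro hpx hp
      have := (invCdf_mem hsupp (min_le_right p 1)).1
      linarith
    rw [h1]
    have : μ (Iic x) = 0 := by
      refine measure_mono_null ?_ hsupp
      intro y hy
      simp only [mem_Iic] at hy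
      simp only [mem_compl_iff, mem_Icc, not_and_or]
      left; linarith
    simp [this]
  rcases le_or_gt x 1 with hx1 | hx1
  · have h1 : (fun p => invCdf 0 1 μ (min p 1)) ⁻¹' Iic x ∩ Ioc 0 1 = Ioc 0 (cdfR μ x) := by
      ext p
      simp only [mem_inter_iff, mem_preimage, mem_Iic, mem_Ioc]
      constructor
      · rintro ⟨hpx, hp0, hp1⟩
        rw [min_eq_left hp1] at hpx
        exact ⟨hp0, (invCdf_le_iff hsupp ⟨hx, hx1⟩ hp1).1 hpx⟩
      · rintro ⟨hp0, hpF⟩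
        have hp1 : p ≤ 1 := le_trans hpF (cdfR_le_one x)
        rw [min_eq_left hp1]
        exact ⟨(invCdf_le_iff hsupp ⟨hx, hx1⟩ hp1).2 hpF, hp0, hp1⟩
    rw [h1, Real.volume_Ioc]
    rw [cdfR, sub_zero, ENNReal.ofReal_toReal (measure_ne_top μ _)]
  · have h1 : (fun p => invCdf 0 1 μ (min p 1)) ⁻¹' Iic x ∩ Ioc 0 1 = Ioc 0 1 := by
      refine inter_eq_self_of_subset_right ?_
      intro p hp
      simp only [mem_preimage, mem_Iic]
      exact le_trans (invCdf_mem hsupp (min_le_right p 1)).2 hx1.le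
    rw [h1, Real.volume_Ioc]
    have : μ (Iic x) = 1 := by
      rw [← prob_compl_eq_zero_iff measurableSet_Iic]
      refine measure_mono_null ?_ hsupp
      intro y hy
      simp only [mem_compl_iff, mem_Iic, not_le] at hy
      simp only [mem_compl_iff, mem_Icc, not_and_or]
      right; push_neg; linarith
    rw [this]; norm_num

lemma integral_transfer [IsProbabilityMeasure μ] (hsupp : μ (Icc (0:ℝ) 1)ᶜ = 0)
    (f : ℝ → ℝ) (hf : Measurable f) :
    ∫ x, f x ∂μ = ∫ p in (0:ℝ)..1, f (invCdf 0 1 μ p) := by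
  have hQm : Measurable (fun p => invCdf 0 1 μ (min p 1)) :=
    (invCdf_min_monotone hsupp).measurable
  have h := integral_map (μ := volume.restrict (Ioc (0:ℝ) 1)) hQm.aemeasurable
    hf.aestronglyMeasurable
  rw [map_invCdf hsupp] at h
  rw [h, intervalIntegral.integral_of_le zero_le_one]
  refine setIntegral_congr_fun measurableSet_Ioc (fun p hp => ?_)
  rw [min_eq_left hp.2]

lemma key_integral [IsProbabilityMeasure μ] (hsupp : μ (Icc (0:ℝ) 1)ᶜ = 0)
    {s : ℝ} (hs : s ∈ Ioc (0:ℝ) 1) (t : ℝ) :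
    ∫ x, max (csrCost s x - t) 0 ∂μ =
      (∫ p in (0:ℝ)..(cdfR μ s), max (invCdf 0 1 μ p + 1 - t) 0)
        + (1 - cdfR μ s) * max (s - t) 0 := by
  have hs01 : s ∈ Icc (0:ℝ) 1 := ⟨hs.1.le, hs.2⟩
  have hFs0 : 0 ≤ cdfR μ s := cdfR_nonneg s
  have hFs1 : cdfR μ s ≤ 1 := cdfR_le_one s
  have hcsr : Measurable (csrCost s) := by
    unfold csrCost
    exact Measurable.ite measurableSet_Iic (measurable_id.add_const 1) measurable_const
  have hf : Measurable (fun x => max (csrCost s x - t) 0) :=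
    (hcsr.sub measurable_const).max measurable_const
  rw [integral_transfer hsupp _ hf]
  have hQle : ∀ p ∈ Icc (0:ℝ) (cdfR μ s), invCdf 0 1 μ p ≤ s := fun p hp =>
    (invCdf_le_iff hsupp hs01 (le_trans hp.2 hFs1)).2 hp.2
  have hQgt : ∀ p ∈ Ioc (cdfR μ s) 1, ¬ invCdf 0 1 μ p ≤ s := fun p hp h =>
    absurd ((invCdf_le_iff hsupp hs01 hp.2).1 h) (not_le.2 hp.1)
  have hmax_mono : MonotoneOn (fun p => max (invCdf 0 1 μ p + 1 - t) 0) (Icc 0 1) :=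
    fun a ha b hb hab =>
      max_le_max (by have := invCdf_mono hsupp hab hb.2; linarith) le_rfl
  have i1' : IntervalIntegrable (fun p => max (invCdf 0 1 μ p + 1 - t) 0)
      volume 0 (cdfR μ s) := by
    refine (hmax_mono.mono ?_).intervalIntegrable
    rw [uIcc_of_le hFs0]
    exact Icc_subset_Icc le_rfl hFs1
  have i1 : IntervalIntegrable (fun p => max (csrCost s (invCdf 0 1 μ p) - t) 0)
      volume 0 (cdfR μ s) := by
    rw [intervalIntegrable_iff_integrableOn_Ioc_of_le hFs0] at i1' ⊢
    refine i1'.congr_fun (fun p hp => ?_) measurableSet_Ioc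
    simp only [csrCost]
    rw [if_pos (hQle p ⟨hp.1.le, hp.2⟩)]
  have i2 : IntervalIntegrable (fun p => max (csrCost s (invCdf 0 1 μ p) - t) 0)
      volume (cdfR μ s) 1 := by
    rw [intervalIntegrable_iff_integrableOn_Ioc_of_le hFs1]
    have hc : IntegrableOn (fun _ : ℝ => max (s - t) 0) (Ioc (cdfR μ s) 1) volume :=
      integrableOn_const measure_Ioc_lt_top.ne
    refine hc.congr_fun (fun p hp => ?_) measurableSet_Ioc
    simp only [csrCost]
    rw [if_neg (hQgt p hp)]
  rw [← intervalIntegral.integral_add_adjacent_intervals i1 i2]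
  congr 1
  · refine intervalIntegral.integral_congr (fun p hp => ?_)
    rw [uIcc_of_le hFs0] at hp
    simp only [csrCost]
    rw [if_pos (hQle p hp)]
  · rw [intervalIntegral.integral_of_le hFs1,
      setIntegral_congr_fun measurableSet_Ioc
        (g := fun _ => max (s - t) 0) (fun p hp => by simp only [csrCost]; rw [if_neg (hQgt p hp)]),
      setIntegral_const, Real.volume_real_Ioc, max_eq_left (by linarith), smul_eq_mul]

/-- Lemma 2: integral representation of the `δ`-CVaR of the ski-rental cost via the
inverse CDF of the purchase-time distribution. -/
theorem cvar_cost_integral (μ : Measure ℝ) (hp : IsProbabilityMeasure μ)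
    (hsupp : μ (Icc (0:ℝ) 1)ᶜ = 0) (δ : ℝ) (hδ : δ ∈ Ico (0:ℝ) 1)
    (s : ℝ) (hs : s ∈ Ioc (0:ℝ) 1) :
    cvar δ μ (fun x => csrCost s x) =
      if cdfR μ s ≤ 1 - δ then
        (1 - δ)⁻¹ * ((1 - δ - cdfR μ s) * s
          + ∫ t in (0:ℝ)..(cdfR μ s), (1 + invCdf 0 1 μ t))
      else
        (1 - δ)⁻¹ * ∫ t in (cdfR μ s - (1 - δ))..(cdfR μ s), (1 + invCdf 0 1 μ t) := by
  have hδ1 : (0:ℝ) < 1 - δ := by linarith [hδ.2]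
  have hFs0 : 0 ≤ cdfR μ s := cdfR_nonneg s
  have hFs1 : cdfR μ s ≤ 1 := cdfR_le_one s
  have hkey : ∀ t, ∫ x, max (csrCost s x - t) 0 ∂μ =
      (∫ p in (0:ℝ)..(cdfR μ s), max (invCdf 0 1 μ p + 1 - t) 0)
        + (1 - cdfR μ s) * max (s - t) 0 := key_integral hsupp hs
  -- generic integrability of monotone functions on subintervals of [0,1]
  have hIInt : ∀ (g : ℝ → ℝ), MonotoneOn g (Icc 0 1) → ∀ a b : ℝ,
      a ∈ Icc (0:ℝ) 1 → b ∈ Icc (0:ℝ) 1 → IntervalIntegrable g volume a b :=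
    fun g hg a b ha hb => (hg.mono (uIcc_subset_Icc ha hb)).intervalIntegrable
  have hQm : MonotoneOn (fun p => invCdf 0 1 μ p) (Icc (0:ℝ) 1) :=
    fun a _ b hb hab => invCdf_mono hsupp hab hb.2
  have hQm1 : MonotoneOn (fun p => 1 + invCdf 0 1 μ p) (Icc (0:ℝ) 1) :=
    fun a ha b hb hab => by have := hQm ha hb hab; simpa using this
  have hQmaxm : ∀ t : ℝ, MonotoneOn (fun p => max (invCdf 0 1 μ p + 1 - t) 0) (Icc (0:ℝ) 1) :=
    fun t a ha b hb hab => max_le_max (by have := hQm ha hb hab; dsimp at this ⊢; linarith) le_rfl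
  have hQsubm : ∀ t : ℝ, MonotoneOn (fun p => invCdf 0 1 μ p + 1 - t) (Icc (0:ℝ) 1) :=
    fun t a ha b hb hab => by have := hQm ha hb hab; dsimp at this ⊢; linarith
  have h01 : (0:ℝ) ∈ Icc (0:ℝ) 1 := ⟨le_rfl, zero_le_one⟩
  have h11 : (1:ℝ) ∈ Icc (0:ℝ) 1 := ⟨zero_le_one, le_rfl⟩
  have hFsI : cdfR μ s ∈ Icc (0:ℝ) 1 := ⟨hFs0, hFs1⟩
  rw [cvar, if_neg (ne_of_lt hδ.2)]
  split_ifs with hcase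
  · -- case F(s) ≤ 1 - δ
    set A : ℝ := (1 - δ - cdfR μ s) * s + ∫ p in (0:ℝ)..(cdfR μ s), (1 + invCdf 0 1 μ p) with hA
    have hIQ : IntervalIntegrable (fun p => 1 + invCdf 0 1 μ p) volume 0 (cdfR μ s) :=
      hIInt _ hQm1 0 _ h01 hFsI
    have hsub : ∀ t : ℝ, ∫ p in (0:ℝ)..(cdfR μ s), (invCdf 0 1 μ p + 1 - t) =
        (∫ p in (0:ℝ)..(cdfR μ s), (1 + invCdf 0 1 μ p)) - cdfR μ s * t := by
      intro t
      have : (fun p => invCdf 0 1 μ p + 1 - t) = fun p => (1 + invCdf 0 1 μ p) - t := by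
        funext p; ring
      rw [this, intervalIntegral.integral_sub hIQ intervalIntegrable_const,
        intervalIntegral.integral_const, sub_zero, smul_eq_mul]
    have lb : ∀ t : ℝ, (1 - δ)⁻¹ * A ≤
        t + (1 - δ)⁻¹ * ∫ x, max (csrCost s x - t) 0 ∂μ := by
      intro t
      rw [hkey t]
      have h1 : (∫ p in (0:ℝ)..(cdfR μ s), (1 + invCdf 0 1 μ p)) - cdfR μ s * t ≤
          ∫ p in (0:ℝ)..(cdfR μ s), max (invCdf 0 1 μ p + 1 - t) 0 := by
        rw [← hsub t]
        exact intervalIntegral.integral_mono_on hFs0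
          (hIInt _ (hQsubm t) 0 _ h01 hFsI) (hIInt _ (hQmaxm t) 0 _ h01 hFsI)
          (fun p _ => le_max_left _ _)
      have h2 : (1 - δ - cdfR μ s) * (s - t) ≤ (1 - cdfR μ s) * max (s - t) 0 := by
        nlinarith [le_max_left (s - t) (0:ℝ), le_max_right (s - t) (0:ℝ), hδ.1]
      have hE : A - (1 - δ) * t ≤
          (∫ p in (0:ℝ)..(cdfR μ s), max (invCdf 0 1 μ p + 1 - t) 0)
            + (1 - cdfR μ s) * max (s - t) 0 := by
        rw [hA]; linarith
      calc (1 - δ)⁻¹ * A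
          = t + (1 - δ)⁻¹ * (A - (1 - δ) * t) := by field_simp; ring
        _ ≤ _ := add_le_add_right (mul_le_mul_of_nonneg_left hE (inv_nonneg.2 hδ1.le)) t
    have ub : s + (1 - δ)⁻¹ * ∫ x, max (csrCost s x - s) 0 ∂μ = (1 - δ)⁻¹ * A := by
      rw [hkey s]
      have h0 : max (s - s) 0 = 0 := by simp
      have hcongr : ∫ p in (0:ℝ)..(cdfR μ s), max (invCdf 0 1 μ p + 1 - s) 0 =
          ∫ p in (0:ℝ)..(cdfR μ s), (invCdf 0 1 μ p + 1 - s) := by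
        refine intervalIntegral.integral_congr (fun p hpp => ?_)
        rw [uIcc_of_le hFs0] at hpp
        have h0p : 0 ≤ invCdf 0 1 μ p := (invCdf_mem hsupp (le_trans hpp.2 hFs1)).1
        exact max_eq_left (by linarith [hs.2])
      rw [h0, mul_zero, add_zero, hcongr, hsub s, hA]
      field_simp
      ring
    refine le_antisymm ?_ (le_ciInf lb)
    exact ciInf_le_of_le ⟨(1 - δ)⁻¹ * A, by rintro y ⟨t, rfl⟩; exact lb t⟩ s ub.le
  · -- case F(s) > 1 - δ
    have hβ0 : 0 < cdfR μ s - (1 - δ) := by push_neg at hcase; linarith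
    have hβF : cdfR μ s - (1 - δ) ≤ cdfR μ s := by linarith
    have hβI : cdfR μ s - (1 - δ) ∈ Icc (0:ℝ) 1 := ⟨hβ0.le, by linarith⟩
    set β : ℝ := cdfR μ s - (1 - δ) with hβ
    set I2 : ℝ := ∫ p in β..(cdfR μ s), (1 + invCdf 0 1 μ p) with hI2
    have hIQ : IntervalIntegrable (fun p => 1 + invCdf 0 1 μ p) volume β (cdfR μ s) :=
      hIInt _ hQm1 _ _ hβI hFsI
    have hsub : ∀ t : ℝ, ∫ p in β..(cdfR μ s), (invCdf 0 1 μ p + 1 - t) =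
        I2 - (1 - δ) * t := by
      intro t
      have heq : (fun p => invCdf 0 1 μ p + 1 - t) = fun p => (1 + invCdf 0 1 μ p) - t := by
        funext p; ring
      rw [heq, intervalIntegral.integral_sub hIQ intervalIntegrable_const,
        intervalIntegral.integral_const, smul_eq_mul, hI2, hβ]
      ring
    have lb : ∀ t : ℝ, (1 - δ)⁻¹ * I2 ≤
        t + (1 - δ)⁻¹ * ∫ x, max (csrCost s x - t) 0 ∂μ := by
      intro t
      rw [hkey t]
      have hsplit : (∫ p in (0:ℝ)..β, max (invCdf 0 1 μ p + 1 - t) 0)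
          + (∫ p in β..(cdfR μ s), max (invCdf 0 1 μ p + 1 - t) 0)
          = ∫ p in (0:ℝ)..(cdfR μ s), max (invCdf 0 1 μ p + 1 - t) 0 :=
        intervalIntegral.integral_add_adjacent_intervals
          (hIInt _ (hQmaxm t) 0 _ h01 hβI) (hIInt _ (hQmaxm t) _ _ hβI hFsI)
      have hpos : 0 ≤ ∫ p in (0:ℝ)..β, max (invCdf 0 1 μ p + 1 - t) 0 :=
        intervalIntegral.integral_nonneg hβ0.le (fun p _ => le_max_right _ _)
      have h1 : I2 - (1 - δ) * t ≤
          ∫ p in β..(cdfR μ s), max (invCdf 0 1 μ p + 1 - t) 0 := by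
        rw [← hsub t]
        exact intervalIntegral.integral_mono_on hβF
          (hIInt _ (hQsubm t) _ _ hβI hFsI) (hIInt _ (hQmaxm t) _ _ hβI hFsI)
          (fun p _ => le_max_left _ _)
      have h2 : 0 ≤ (1 - cdfR μ s) * max (s - t) 0 :=
        mul_nonneg (by linarith) (le_max_right _ _)
      have hE : I2 - (1 - δ) * t ≤
          (∫ p in (0:ℝ)..(cdfR μ s), max (invCdf 0 1 μ p + 1 - t) 0)
            + (1 - cdfR μ s) * max (s - t) 0 := by linarith
      calc (1 - δ)⁻¹ * I2
          = t + (1 - δ)⁻¹ * (I2 - (1 - δ) * t) := by field_simp; ring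
        _ ≤ _ := add_le_add_right (mul_le_mul_of_nonneg_left hE (inv_nonneg.2 hδ1.le)) t
    have hQβ : invCdf 0 1 μ β ∈ Icc (0:ℝ) 1 := invCdf_mem hsupp hβI.2
    have ub : (1 + invCdf 0 1 μ β)
        + (1 - δ)⁻¹ * ∫ x, max (csrCost s x - (1 + invCdf 0 1 μ β)) 0 ∂μ
        = (1 - δ)⁻¹ * I2 := by
      rw [hkey (1 + invCdf 0 1 μ β)]
      have h0 : max (s - (1 + invCdf 0 1 μ β)) 0 = 0 :=
        max_eq_right (by linarith [hs.2, hQβ.1])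
      have hz : ∫ p in (0:ℝ)..β, max (invCdf 0 1 μ p + 1 - (1 + invCdf 0 1 μ β)) 0 = 0 := by
        have : ∫ p in (0:ℝ)..β, max (invCdf 0 1 μ p + 1 - (1 + invCdf 0 1 μ β)) 0 =
            ∫ _ in (0:ℝ)..β, (0:ℝ) := by
          refine intervalIntegral.integral_congr (fun p hpp => ?_)
          rw [uIcc_of_le hβ0.le] at hpp
          have := invCdf_mono hsupp hpp.2 hβI.2
          exact max_eq_right (by linarith)
        rw [this, intervalIntegral.integral_zero]
      have hup : ∫ p in β..(cdfR μ s), max (invCdf 0 1 μ p + 1 - (1 + invCdf 0 1 μ β)) 0 =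
          ∫ p in β..(cdfR μ s), (invCdf 0 1 μ p + 1 - (1 + invCdf 0 1 μ β)) := by
        refine intervalIntegral.integral_congr (fun p hpp => ?_)
        rw [uIcc_of_le hβF] at hpp
        have := invCdf_mono hsupp hpp.1 (le_trans hpp.2 hFs1)
        exact max_eq_left (by linarith)
      have hsplit : (∫ p in (0:ℝ)..β, max (invCdf 0 1 μ p + 1 - (1 + invCdf 0 1 μ β)) 0)
          + (∫ p in β..(cdfR μ s), max (invCdf 0 1 μ p + 1 - (1 + invCdf 0 1 μ β)) 0)
          = ∫ p in (0:ℝ)..(cdfR μ s), max (invCdf 0 1 μ p + 1 - (1 + invCdf 0 1 μ β)) 0 :=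
        intervalIntegral.integral_add_adjacent_intervals
          (hIInt _ (hQmaxm _) 0 _ h01 hβI) (hIInt _ (hQmaxm _) _ _ hβI hFsI)
      rw [h0, mul_zero, add_zero, ← hsplit, hz, zero_add, hup, hsub]
      field_simp
      ring
    refine le_antisymm ?_ (le_ciInf lb)
    exact ciInf_le_of_le ⟨(1 - δ)⁻¹ * I2, by rintro y ⟨t, rfl⟩; exact lb t⟩
      (1 + invCdf 0 1 μ β) ub.le
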